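/- Let β > 0. For every a > 0, the integral ∫_{ℝ³} exp(a·‖v‖²/λ(v)) · M_β(v) dv is finite; that is, ‖v‖²/λ(v) has all exponential moments with respect to the measure M_β(v) dv. (Here λ(v) > 0 for every v, so the integrand is well defined.) -/

import Mathlib

open MeasureTheory

noncomputable section

abbrev E3 := EuclideanSpace ℝ (Fin 3)

/-- The Maxwellian density with inverse temperature `β` on `ℝ³`. -/
def Mβ (β : ℝ) (v : E3) : ℝ :=
  (β / (2 * Real.pi)) ^ ((3 : ℝ) / 2) * Real.exp (-(β / 2) * ‖v‖ ^ 2)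

/-- The collision frequency `λ(v) = π ∫ M_β(w) ‖v − w‖ dw`. -/
def lam (β : ℝ) (v : E3) : ℝ := Real.pi * ∫ w : E3, Mβ β w * ‖v - w‖

lemma gauss_integrable {b : ℝ} (hb : 0 < b) :
    Integrable (fun v : E3 => Real.exp (-b * ‖v‖ ^ 2)) := by
  have h := (GaussianFourier.integrable_cexp_neg_mul_sq_norm_add (V := E3) (b := (b : ℂ))
    (by simpa using hb) 0 0).norm
  convert h using 2 with v
  simp [Complex.norm_exp]
  norm_cast
  simp

lemma Mβ_pos {β : ℝ} (hβ : 0 < β) (v : E3) : 0 < Mβ β v := by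
  have : (0:ℝ) < β / (2 * Real.pi) := by positivity
  exact mul_pos (Real.rpow_pos_of_pos this _) (Real.exp_pos _)

lemma Mβ_cont {β : ℝ} : Continuous (Mβ β) := by
  unfold Mβ
  fun_prop

lemma Mβ_integrable {β : ℝ} (hβ : 0 < β) : Integrable (Mβ β) := by
  have h := (gauss_integrable (b := β / 2) (by positivity)).const_mul
    ((β / (2 * Real.pi)) ^ ((3 : ℝ) / 2))
  unfold Mβ
  exact h

lemma norm_exp_bound {β : ℝ} (hβ : 0 < β) (t : ℝ) (ht : 0 ≤ t) :
    t * Real.exp (-(β / 2) * t ^ 2) ≤ (1 + 4 / β) * Real.exp (-(β / 4) * t ^ 2) := by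
  have h1 : t ≤ (1 + 4 / β) * Real.exp ((β / 4) * t ^ 2) := by
    have e1 : (1 : ℝ) ≤ Real.exp ((β / 4) * t ^ 2) := Real.one_le_exp (by positivity)
    have e2 : (β / 4) * t ^ 2 ≤ Real.exp ((β / 4) * t ^ 2) :=
      (Real.add_one_le_exp _).trans' (by linarith [sq_nonneg t])
    have h3 := mul_le_mul_of_nonneg_left e2 (by positivity : (0:ℝ) ≤ 4 / β)
    have h4 : 4 / β * (β / 4 * t ^ 2) = t ^ 2 := by field_simp
    rw [h4] at h3
    nlinarith [sq_nonneg (t - 1)]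
  calc t * Real.exp (-(β / 2) * t ^ 2)
      ≤ ((1 + 4 / β) * Real.exp ((β / 4) * t ^ 2)) * Real.exp (-(β / 2) * t ^ 2) := by
        exact mul_le_mul_of_nonneg_right h1 (Real.exp_pos _).le
    _ = (1 + 4 / β) * Real.exp (-(β / 4) * t ^ 2) := by
        rw [mul_assoc, ← Real.exp_add]; ring_nf

lemma Mβ_norm_integrable {β : ℝ} (hβ : 0 < β) :
    Integrable (fun w : E3 => Mβ β w * ‖w‖) := by
  have hint := (gauss_integrable (b := β / 4) (by positivity)).const_mul
    ((β / (2 * Real.pi)) ^ ((3 : ℝ) / 2) * (1 + 4 / β))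
  refine hint.mono ?_ ?_
  · exact (Mβ_cont.mul continuous_norm).aestronglyMeasurable
  · filter_upwards with w
    have h0 : (0:ℝ) < (β / (2 * Real.pi)) ^ ((3 : ℝ) / 2) :=
      Real.rpow_pos_of_pos (by positivity) _
    have hb := norm_exp_bound hβ ‖w‖ (norm_nonneg w)
    rw [Real.norm_eq_abs, Real.norm_eq_abs, abs_of_nonneg, abs_of_nonneg]
    · unfold Mβ
      calc ((β / (2 * Real.pi)) ^ ((3 : ℝ) / 2) * Real.exp (-(β / 2) * ‖w‖ ^ 2)) * ‖w‖
          = (β / (2 * Real.pi)) ^ ((3 : ℝ) / 2) * (‖w‖ * Real.exp (-(β / 2) * ‖w‖ ^ 2)) := by ring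
        _ ≤ (β / (2 * Real.pi)) ^ ((3 : ℝ) / 2) * ((1 + 4 / β) * Real.exp (-(β / 4) * ‖w‖ ^ 2)) :=
            mul_le_mul_of_nonneg_left hb h0.le
        _ = (β / (2 * Real.pi)) ^ ((3 : ℝ) / 2) * (1 + 4 / β) * Real.exp (-(β / 4) * ‖w‖ ^ 2) := by
            ring
    · positivity
    · exact mul_nonneg (Mβ_pos hβ w).le (norm_nonneg w)

lemma lam_integrand_integrable {β : ℝ} (hβ : 0 < β) (v : E3) :
    Integrable (fun w : E3 => Mβ β w * ‖v - w‖) := by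
  have hint := ((Mβ_integrable hβ).const_mul ‖v‖).add (Mβ_norm_integrable hβ)
  refine hint.mono ?_ ?_
  · exact (Mβ_cont.mul ((continuous_const.sub continuous_id).norm)).aestronglyMeasurable
  · filter_upwards with w
    have h1 : ‖v - w‖ ≤ ‖v‖ + ‖w‖ := norm_sub_le v w
    have h2 : 0 ≤ Mβ β w := (Mβ_pos hβ w).le
    simp only [Pi.add_apply]
    rw [Real.norm_eq_abs, Real.norm_eq_abs,
      abs_of_nonneg (mul_nonneg h2 (norm_nonneg _)),
      abs_of_nonneg (add_nonneg (mul_nonneg (norm_nonneg v) h2)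
        (mul_nonneg h2 (norm_nonneg w)))]
    nlinarith [norm_nonneg w, norm_nonneg v]

lemma lam_pos {β : ℝ} (hβ : 0 < β) (v : E3) : 0 < lam β v := by
  refine mul_pos Real.pi_pos ?_
  rw [integral_pos_iff_support_of_nonneg
    (fun w => mul_nonneg (Mβ_pos hβ w).le (norm_nonneg _)) (lam_integrand_integrable hβ v)]
  have hsub : ({v}ᶜ : Set E3) ⊆ Function.support (fun w : E3 => Mβ β w * ‖v - w‖) := by
    intro w hw
    have : v - w ≠ 0 := sub_ne_zero.2 (Ne.symm hw)
    simp only [Function.mem_support]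
    exact (mul_pos (Mβ_pos hβ w) (norm_pos_iff.mpr this)).ne'
  refine lt_of_lt_of_le ?_ (measure_mono hsub)
  calc (0 : ENNReal) < volume (Metric.ball (0:E3) 1) := Metric.measure_ball_pos _ _ one_pos
    _ ≤ volume (Set.univ : Set E3) := measure_mono (Set.subset_univ _)
    _ = volume ({v}ᶜ : Set E3) := by
        rw [Set.compl_eq_univ_diff, measure_diff_null (measure_singleton v)]

lemma lam_sub_le {β : ℝ} (hβ : 0 < β) (v v' : E3) :
    |lam β v - lam β v'| ≤ Real.pi * (∫ w : E3, Mβ β w) * ‖v - v'‖ := by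
  have hi := lam_integrand_integrable hβ v
  have hi' := lam_integrand_integrable hβ v'
  unfold lam
  rw [← mul_sub, abs_mul, abs_of_nonneg Real.pi_pos.le, ← integral_sub hi hi', mul_assoc]
  refine mul_le_mul_of_nonneg_left ?_ Real.pi_pos.le
  calc |∫ w : E3, (Mβ β w * ‖v - w‖ - Mβ β w * ‖v' - w‖)|
      ≤ ∫ w : E3, |Mβ β w * ‖v - w‖ - Mβ β w * ‖v' - w‖| := by
        simpa [Real.norm_eq_abs] using norm_integral_le_integral_norm
          (fun w : E3 => Mβ β w * ‖v - w‖ - Mβ β w * ‖v' - w‖)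
    _ ≤ ∫ w : E3, Mβ β w * ‖v - v'‖ := by
        refine integral_mono (hi.sub hi').abs ((Mβ_integrable hβ).mul_const _) fun w => ?_
        rw [← mul_sub, abs_mul, abs_of_nonneg (Mβ_pos hβ w).le]
        refine mul_le_mul_of_nonneg_left ?_ (Mβ_pos hβ w).le
        simpa [sub_sub_sub_cancel_right] using abs_norm_sub_norm_le (v - w) (v' - w)
    _ = (∫ w : E3, Mβ β w) * ‖v - v'‖ := integral_mul_const _ _

lemma lam_continuous {β : ℝ} (hβ : 0 < β) : Continuous (lam β) := by
  have hK : 0 ≤ Real.pi * ∫ w : E3, Mβ β w :=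
    mul_nonneg Real.pi_pos.le (integral_nonneg fun w => (Mβ_pos hβ w).le)
  refine LipschitzWith.continuous (K := (Real.pi * ∫ w : E3, Mβ β w).toNNReal)
    (LipschitzWith.of_dist_le_mul fun v v' => ?_)
  rw [Real.dist_eq, dist_eq_norm, Real.coe_toNNReal _ hK]
  exact lam_sub_le hβ v v'

lemma lam_lower {β : ℝ} (hβ : 0 < β) (v : E3) :
    Real.pi * ((∫ w : E3, Mβ β w) * ‖v‖ - ∫ w : E3, Mβ β w * ‖w‖) ≤ lam β v := by
  unfold lam
  refine mul_le_mul_of_nonneg_left ?_ Real.pi_pos.le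
  calc (∫ w : E3, Mβ β w) * ‖v‖ - ∫ w : E3, Mβ β w * ‖w‖
      = ∫ w : E3, (Mβ β w * ‖v‖ - Mβ β w * ‖w‖) := by
        rw [integral_sub ((Mβ_integrable hβ).mul_const _) (Mβ_norm_integrable hβ),
          integral_mul_const]
    _ ≤ ∫ w : E3, Mβ β w * ‖v - w‖ := by
        refine integral_mono (((Mβ_integrable hβ).mul_const _).sub (Mβ_norm_integrable hβ))
          (lam_integrand_integrable hβ v) fun w => ?_
        have h1 : ‖v‖ - ‖w‖ ≤ ‖v - w‖ := norm_sub_norm_le v w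
        have h2 : 0 ≤ Mβ β w := (Mβ_pos hβ w).le
        nlinarith

/-- `λ(v) > 0` for every `v`, and `‖v‖²/λ(v)` has all exponential moments with respect to
the measure `M_β(v) dv`: for every `a > 0`, `∫ exp(a‖v‖²/lam(v)) M_β(v) dv < ∞`. -/
theorem exp_moments_of_energy_over_lam (β : ℝ) (hβ : 0 < β) :
    (∀ v : E3, 0 < lam β v) ∧
    ∀ a : ℝ, 0 < a →
      Integrable (fun v : E3 => Real.exp (a * ‖v‖ ^ 2 / lam β v) * Mβ β v) := by
  refine ⟨lam_pos hβ, fun a ha => ?_⟩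
  set m := ∫ w : E3, Mβ β w with hm_def
  have hm : 0 < m := by
    rw [hm_def, integral_pos_iff_support_of_nonneg (fun w => (Mβ_pos hβ w).le)
      (Mβ_integrable hβ)]
    have hsupp : Function.support (Mβ β) = Set.univ :=
      Set.eq_univ_of_forall fun w => (Mβ_pos hβ w).ne'
    rw [hsupp]
    exact lt_of_lt_of_le (Metric.measure_ball_pos _ (0:E3) one_pos)
      (measure_mono (Set.subset_univ _))
  set C := ∫ w : E3, Mβ β w * ‖w‖ with hC_def
  have hC : 0 ≤ C :=
    integral_nonneg fun w => mul_nonneg (Mβ_pos hβ w).le (norm_nonneg _)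
  set R := 2 * C / m + 1 with hR_def
  have hR0 : 0 < R := by positivity
  obtain ⟨v₀, _, hv₀⟩ := (isCompact_closedBall (0:E3) R).exists_isMinOn
    ⟨0, Metric.mem_closedBall_self hR0.le⟩ ((lam_continuous hβ).continuousOn)
  have hδ : 0 < lam β v₀ := lam_pos hβ v₀
  set δ := lam β v₀ with hδ_def
  set c := 2 * a / (Real.pi * m) with hc_def
  have hc0 : 0 < c := by positivity
  set K := a * R ^ 2 / δ with hK_def
  have hK0 : 0 ≤ K := by positivity
  have key : ∀ v : E3, a * ‖v‖ ^ 2 / lam β v ≤ K + c * ‖v‖ := by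
    intro v
    by_cases hv : ‖v‖ ≤ R
    · have hmem : v ∈ Metric.closedBall (0:E3) R := by
        rw [Metric.mem_closedBall, dist_zero_right]; exact hv
      have h1 : δ ≤ lam β v := hv₀ hmem
      have h2 : a * ‖v‖ ^ 2 / lam β v ≤ a * R ^ 2 / δ := by
        refine div_le_div₀ (by positivity) ?_ hδ h1
        nlinarith [norm_nonneg v, mul_le_mul hv hv (norm_nonneg v) hR0.le, ha.le]
      linarith [mul_nonneg hc0.le (norm_nonneg v)]
    · push_neg at hv
      have hvpos : 0 < ‖v‖ := lt_trans hR0 hv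
      have hlow : Real.pi * (m * ‖v‖ / 2) ≤ lam β v := by
        refine le_trans ?_ (lam_lower hβ v)
        refine mul_le_mul_of_nonneg_left ?_ Real.pi_pos.le
        have h3 : 2 * C / m ≤ ‖v‖ := by rw [hR_def] at hv; linarith
        rw [div_le_iff₀ hm] at h3
        linarith
      have hd : 0 < Real.pi * (m * ‖v‖ / 2) := by positivity
      have h4 : a * ‖v‖ ^ 2 / lam β v ≤ a * ‖v‖ ^ 2 / (Real.pi * (m * ‖v‖ / 2)) :=
        div_le_div_of_nonneg_left (by positivity) hd hlow
      have h5 : a * ‖v‖ ^ 2 / (Real.pi * (m * ‖v‖ / 2)) = c * ‖v‖ := by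
        rw [hc_def]
        field_simp
      linarith
  have hbound : ∀ v : E3, Real.exp (a * ‖v‖ ^ 2 / lam β v) * Mβ β v
      ≤ (Real.exp (K + c ^ 2 / β) * (β / (2 * Real.pi)) ^ ((3:ℝ)/2))
        * Real.exp (-(β/4) * ‖v‖ ^ 2) := by
    intro v
    have hx := key v
    have hq : c * ‖v‖ - β / 4 * ‖v‖ ^ 2 ≤ c ^ 2 / β := by
      rw [le_div_iff₀ hβ]
      nlinarith [sq_nonneg (c - β / 2 * ‖v‖)]
    have hexp : a * ‖v‖ ^ 2 / lam β v + -(β / 2) * ‖v‖ ^ 2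
        ≤ (K + c ^ 2 / β) + -(β / 4) * ‖v‖ ^ 2 := by linarith
    have hMc : (0:ℝ) < (β / (2 * Real.pi)) ^ ((3:ℝ)/2) :=
      Real.rpow_pos_of_pos (by positivity) _
    calc Real.exp (a * ‖v‖ ^ 2 / lam β v) * Mβ β v
        = (β / (2 * Real.pi)) ^ ((3:ℝ)/2)
            * Real.exp (a * ‖v‖ ^ 2 / lam β v + -(β / 2) * ‖v‖ ^ 2) := by
          rw [Real.exp_add]; simp only [Mβ]; ring
      _ ≤ (β / (2 * Real.pi)) ^ ((3:ℝ)/2)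
            * Real.exp ((K + c ^ 2 / β) + -(β / 4) * ‖v‖ ^ 2) :=
          mul_le_mul_of_nonneg_left (Real.exp_le_exp.mpr hexp) hMc.le
      _ = (Real.exp (K + c ^ 2 / β) * (β / (2 * Real.pi)) ^ ((3:ℝ)/2))
            * Real.exp (-(β/4) * ‖v‖ ^ 2) := by
          rw [Real.exp_add]; ring
  have hcont : Continuous fun v : E3 => Real.exp (a * ‖v‖ ^ 2 / lam β v) * Mβ β v :=
    (Real.continuous_exp.comp (((continuous_const.mul (continuous_norm.pow 2)).div
      (lam_continuous hβ) fun v => (lam_pos hβ v).ne'))).mul Mβ_cont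
  refine ((gauss_integrable (b := β/4) (by positivity)).const_mul
    (Real.exp (K + c ^ 2 / β) * (β / (2 * Real.pi)) ^ ((3:ℝ)/2))).mono
    hcont.aestronglyMeasurable ?_
  filter_upwards with v
  have hMc : (0:ℝ) < (β / (2 * Real.pi)) ^ ((3:ℝ)/2) :=
    Real.rpow_pos_of_pos (by positivity) _
  rw [Real.norm_eq_abs, Real.norm_eq_abs,
    abs_of_nonneg (mul_nonneg (Real.exp_pos _).le (Mβ_pos hβ v).le),
    abs_of_nonneg (by positivity)]
  exact hbound v
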